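/- Let D ∈ ℝ^{M₁×M₂} have rank r_d and compact SVD D = UΣVᵀ, where U ∈ ℝ^{M₁×r_d} has orthonormal columns, Σ ∈ ℝ^{r_d×r_d} is diagonal with positive diagonal entries, and V ∈ ℝ^{M₂×r_d} has orthonormal columns; let v^i ∈ ℝ^{r_d} denote the i-th row of V and d_i the i-th column of D, and assume every column of D is nonzero. If C* ∈ ℝ^{M₁×M₂} is an optimal point of the problem min_C Σ_{i=1}^{M₂} ‖Dᵀc_i‖₂ subject to c_iᵀd_i = 1 for all i (c_i the i-th column of C), and A = |DᵀC*| (entrywise absolute value), then A(j,i) = |⟨v^j, v^i⟩| / ‖v^i‖₂² for all i, j. -/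

import Mathlib

open Matrix Finset MeasureTheory ProbabilityTheory

noncomputable section

namespace Paper

instance {m n α : Type*} [MeasurableSpace α] : MeasurableSpace (Matrix m n α) :=
  MeasurableSpace.pi

/-- Euclidean (`ℓ₂`) norm of a vector. -/
def enorm {ι : Type*} [Fintype ι] (v : ι → ℝ) : ℝ := Real.sqrt (∑ i, v i ^ 2)

/-- `ℓ_p` norm of a vector. -/
def pnorm {ι : Type*} [Fintype ι] (p : ℝ) (v : ι → ℝ) : ℝ := (∑ i, |v i| ^ p) ^ (1 / p)

/-- Spectral norm (largest singular value) of a real matrix. -/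
def spec {a b : Type*} [Fintype a] [Fintype b] (M : Matrix a b ℝ) : ℝ :=
  ⨆ v : { v : b → ℝ // enorm v = 1 }, enorm (M.mulVec v.1)

/-- Smallest singular value of a real matrix. -/
def smin {a b : Type*} [Fintype a] [Fintype b] (M : Matrix a b ℝ) : ℝ :=
  ⨅ v : { v : b → ℝ // enorm v = 1 }, enorm (M.mulVec v.1)

/-- Column space (span of the columns) of a matrix. -/
def colSpan {a b : Type*} (M : Matrix a b ℝ) : Submodule ℝ (a → ℝ) :=
  Submodule.span ℝ (Set.range Mᵀ)

/-- Requirement 1 with parameters `κ` and `p`; the columns of the data matrix are indexed by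
`Fin m × Fin n`, the first coordinate being the cluster index. -/
def Req1 {m n : ℕ} (A : Matrix (Fin m × Fin n) (Fin m × Fin n) ℝ) (κ p : ℝ) : Prop :=
  ∀ i : Fin m × Fin n,
    κ / ((m : ℝ) - 1) * ∑ j ∈ univ.filter (fun j : Fin m × Fin n => j.1 ≠ i.1), |A j i| ^ p
      < ∑ j ∈ univ.filter (fun j : Fin m × Fin n => j.1 = i.1), |A j i| ^ p

/-- Feasibility for the direction-search problem: `cᵢᵀ dᵢ = 1` for every column. -/
def Feasible {a ι : Type*} [Fintype a] [Fintype ι] (D C : Matrix a ι ℝ) : Prop :=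
  ∀ i, dotProduct (Cᵀ i) (Dᵀ i) = 1

/-- Optimal point of `min_C ∑ᵢ ‖Dᵀ cᵢ‖_p  s.t.  cᵢᵀ dᵢ = 1`. -/
def IsOptimal {a ι : Type*} [Fintype a] [Fintype ι] (p : ℝ) (D C : Matrix a ι ℝ) : Prop :=
  Feasible D C ∧ ∀ C' : Matrix a ι ℝ, Feasible D C' →
    ∑ i, pnorm p (Dᵀ.mulVec (Cᵀ i)) ≤ ∑ i, pnorm p (Dᵀ.mulVec (C'ᵀ i))

/-- Optimal point of `min_C ∑ᵢ ‖Dᵀ cᵢ‖₂  s.t.  cᵢᵀ dᵢ = 1`. -/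
def IsOptimal2 {a ι : Type*} [Fintype a] [Fintype ι] (D C : Matrix a ι ℝ) : Prop :=
  Feasible D C ∧ ∀ C' : Matrix a ι ℝ, Feasible D C' →
    ∑ i, enorm (Dᵀ.mulVec (Cᵀ i)) ≤ ∑ i, enorm (Dᵀ.mulVec (C'ᵀ i))

/-- The adjacency matrix `A = |Dᵀ C|`. -/
def adjacency {a ι : Type*} [Fintype a] [Fintype ι] (D C : Matrix a ι ℝ) : Matrix ι ι ℝ :=
  Matrix.of fun j i => |(Dᵀ * C) j i|

/-- `Δ_min`: the permeance statistic of the clusters. -/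
def Dmin {M₁ m n s rs : ℕ} (D : Matrix (Fin M₁) (Fin m × Fin n) ℝ)
    (Smat : Matrix (Fin M₁) (Fin s) ℝ) (Ud : Fin m → Matrix (Fin M₁) (Fin rs) ℝ)
    (p : ℝ) : ℝ :=
  ⨅ j : Fin m, ⨅ u : { u : Fin M₁ → ℝ // u ∈ colSpan Smat ⊔ colSpan (Ud j) ∧ enorm u = 1 },
    ∑ t : Fin n, |dotProduct u.1 (Dᵀ (j, t))| ^ p

/-- `Δ̇_max`. -/
def Ddotmax {M₁ m n rs : ℕ} (D : Matrix (Fin M₁) (Fin m × Fin n) ℝ)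
    (Ud : Fin m → Matrix (Fin M₁) (Fin rs) ℝ) (p : ℝ) : ℝ :=
  ⨆ j : Fin m, ⨆ u : { u : Fin rs → ℝ // enorm u = 1 },
    ∑ t : Fin n, |dotProduct u.1 ((Ud j)ᵀ.mulVec (Dᵀ (j, t)))| ^ p

/-- `Δ̄_max`. -/
def Dbarmax {M₁ m n s : ℕ} (D : Matrix (Fin M₁) (Fin m × Fin n) ℝ)
    (Smat : Matrix (Fin M₁) (Fin s) ℝ) (p : ℝ) : ℝ :=
  ⨆ j : Fin m, ⨆ u : { u : Fin s → ℝ // enorm u = 1 },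
    ∑ t : Fin n, |dotProduct u.1 (Smatᵀ.mulVec (Dᵀ (j, t)))| ^ p

/-- `φ = max_{j ≠ t} ‖U̇ₜᵀ U̇ⱼ‖`. -/
def phi {M₁ m rs : ℕ} (Ud : Fin m → Matrix (Fin M₁) (Fin rs) ℝ) : ℝ :=
  ⨆ j : Fin m, ⨆ t : Fin m, if j ≠ t then spec ((Ud t)ᵀ * Ud j) else 0

/-- `z_{δ,x}`. -/
def zd (m n : ℕ) (δ x : ℝ) : ℝ :=
  1 + 2 * Real.sqrt (1 / x * Real.log (2 * n * m / δ)) + 2 / x * Real.log (2 * n * m / δ)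

/-- `η_{δ,x}`. -/
def etad (m n : ℕ) (δ x : ℝ) : ℝ :=
  max (4 * zd m n δ x / 3 * Real.log (2 * x * m / δ))
    (Real.sqrt (4 * n * (x + 3) / x ^ 2 * Real.log (2 * x * m / δ)))

/-- `σ_l(x/y, δ)`. -/
def sigl (M₂ : ℕ) (δ x y : ℝ) : ℝ :=
  (x - 2 * Real.sqrt (x * Real.log (2 * M₂ / δ))) /
    (y + 2 * Real.sqrt ((y - x) * Real.log (2 * M₂ / δ)) + 2 * Real.log (2 * M₂ / δ)
      - 2 * Real.sqrt (x * Real.log (2 * M₂ / δ)))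

/-- `σ_u(x/y, δ)`. -/
def sigu (M₂ : ℕ) (δ x y : ℝ) : ℝ :=
  (x + 2 * Real.sqrt (x * Real.log (2 * M₂ / δ)) + 2 * Real.log (2 * M₂ / δ)) /
    (y + 2 * Real.sqrt (x * Real.log (2 * M₂ / δ)) + 2 * Real.log (2 * M₂ / δ)
      - 2 * Real.sqrt ((y - x) * Real.log (2 * M₂ / δ)))

/-- `c_δ` of Theorems 3 and 8. -/
def cdel (M₁ m r s : ℕ) (δ : ℝ) : ℝ :=
  3 * max 1 (max (Real.sqrt (8 * M₁ * Real.pi / (((M₁ : ℝ) - 1) * ((r : ℝ) - s))))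
    (Real.sqrt (16 * M₁ * Real.log (m * r / δ) / (((M₁ : ℝ) - 1) * ((r : ℝ) - s)))))


/-- if `C*` is an optimal point of `min_C ∑ᵢ ‖Dᵀcᵢ‖₂ s.t. cᵢᵀdᵢ = 1` and
`A = |DᵀC*|`, then `A(j,i) = |⟨vʲ, vⁱ⟩| / ‖vⁱ‖₂²` where `vⁱ` is the `i`-th row of `V`. -/
theorem statement0 (M₁ M₂ rd : ℕ)
    (D : Matrix (Fin M₁) (Fin M₂) ℝ) (U : Matrix (Fin M₁) (Fin rd) ℝ)
    (σ : Fin rd → ℝ) (V : Matrix (Fin M₂) (Fin rd) ℝ)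
    (hrank : D.rank = rd)
    (hsvd : D = U * Matrix.diagonal σ * Vᵀ)
    (hU : Uᵀ * U = 1) (hV : Vᵀ * V = 1)
    (hσ : ∀ i, 0 < σ i)
    (hcols : ∀ i, Dᵀ i ≠ 0)
    (C : Matrix (Fin M₁) (Fin M₂) ℝ)
    (hC : IsOptimal2 D C) :
    ∀ i j, adjacency D C j i = |dotProduct (V j) (V i)| / enorm (V i) ^ 2 := by
  intro i j
  obtain ⟨hfeas, hopt⟩ := hC
  set M : Matrix (Fin rd) (Fin M₁) ℝ := Matrix.diagonal σ * Uᵀ with hM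
  have hDT : Dᵀ = V * M := by
    rw [hsvd, hM]
    simp [Matrix.transpose_mul, Matrix.diagonal_transpose, Matrix.mul_assoc]
  have hmv : ∀ c : Fin M₁ → ℝ, Dᵀ *ᵥ c = V *ᵥ (M *ᵥ c) := by
    intro c; rw [hDT, Matrix.mulVec_mulVec]
  have hVdot : ∀ y : Fin rd → ℝ, (V *ᵥ y) ⬝ᵥ (V *ᵥ y) = y ⬝ᵥ y := by
    intro y
    rw [Matrix.dotProduct_mulVec, ← Matrix.transpose_transpose V, Matrix.vecMul_transpose,
      Matrix.transpose_transpose, Matrix.mulVec_mulVec, hV, Matrix.one_mulVec]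
  have hsumsq : ∀ {ι : Type} [Fintype ι] (v : ι → ℝ), ∑ k, v k ^ 2 = v ⬝ᵥ v := by
    intro ι _ v; simp [dotProduct, sq]
  have henorm : ∀ y : Fin rd → ℝ, enorm (V *ᵥ y) = Real.sqrt (y ⬝ᵥ y) := by
    intro y; rw [enorm, hsumsq, hVdot]
  have happ : ∀ (y : Fin rd → ℝ) (i' : Fin M₂), (V *ᵥ y) i' = (V i') ⬝ᵥ y := fun _ _ => rfl
  have hconstr : ∀ (c : Fin M₁ → ℝ) (i' : Fin M₂), c ⬝ᵥ Dᵀ i' = (V i') ⬝ᵥ (M *ᵥ c) := by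
    intro c i'
    have h1 : c ⬝ᵥ Dᵀ i' = (Dᵀ *ᵥ c) i' := by
      simp [Matrix.mulVec, dotProduct, mul_comm]
    rw [h1, hmv, happ]
  have hsurj : ∀ y0 : Fin rd → ℝ, ∃ c, M *ᵥ c = y0 := by
    intro y0
    refine ⟨U *ᵥ (Matrix.diagonal (fun k => (σ k)⁻¹) *ᵥ y0), ?_⟩
    rw [Matrix.mulVec_mulVec, Matrix.mulVec_mulVec, hM, Matrix.mul_assoc (Matrix.diagonal σ),
      hU, Matrix.mul_one, Matrix.diagonal_mul_diagonal]
    have : (fun k => σ k * (σ k)⁻¹) = fun _ => (1 : ℝ) := by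
      funext k; exact mul_inv_cancel₀ (hσ k).ne'
    rw [this]
    simp [Matrix.diagonal_one]
  set a : Fin rd → ℝ := V i with ha
  set y : Fin rd → ℝ := M *ᵥ (Cᵀ i) with hy
  have h1 : a ⬝ᵥ y = 1 := by rw [hy, ← hconstr]; exact hfeas i
  set s : ℝ := a ⬝ᵥ a with hs
  have hsnn : 0 ≤ s := by rw [hs, ← hsumsq]; positivity
  have hs0 : 0 < s := by
    rcases hsnn.lt_or_eq with h | h
    · exact h
    · exfalso
      have ha0 : a = 0 := dotProduct_self_eq_zero.mp h.symm
      rw [ha0] at h1; simp at h1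
  obtain ⟨c0, hc0⟩ := hsurj ((1 / s) • a)
  set C' : Matrix (Fin M₁) (Fin M₂) ℝ :=
    Matrix.of fun k i' => if i' = i then c0 k else C k i' with hC'
  have hC'col : ∀ i', C'ᵀ i' = if i' = i then c0 else Cᵀ i' := by
    intro i'; funext k
    by_cases h : i' = i <;> simp [hC', Matrix.transpose_apply, h]
  have hC'feas : Feasible D C' := by
    intro i'
    rw [hC'col]
    by_cases h : i' = i
    · subst h
      rw [if_pos rfl, hconstr, hc0, dotProduct_smul, ← ha, ← hs, smul_eq_mul]
      field_simp
    · rw [if_neg h]; exact hfeas i'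
  have hsum := hopt C' hC'feas
  have key : enorm (Dᵀ *ᵥ Cᵀ i) ≤ enorm (Dᵀ *ᵥ c0) := by
    have heq : ∀ i' ∈ Finset.univ.erase i,
        enorm (Dᵀ *ᵥ C'ᵀ i') = enorm (Dᵀ *ᵥ Cᵀ i') := by
      intro i' hi'
      rw [hC'col, if_neg (Finset.mem_erase.mp hi').1]
    rw [← Finset.sum_erase_add Finset.univ _ (Finset.mem_univ i),
      ← Finset.sum_erase_add Finset.univ (fun i' => enorm (Dᵀ *ᵥ C'ᵀ i'))
        (Finset.mem_univ i), Finset.sum_congr rfl heq, hC'col, if_pos rfl] at hsum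
    exact le_of_add_le_add_left (by linarith)
  have hc0dot : ((1 / s : ℝ) • a) ⬝ᵥ ((1 / s : ℝ) • a) = 1 / s := by
    rw [smul_dotProduct, dotProduct_smul, ← hs, smul_eq_mul, smul_eq_mul]
    field_simp
  have hyle : y ⬝ᵥ y ≤ 1 / s := by
    have h2 := key
    rw [hmv, hmv, hc0, henorm, henorm, hc0dot, ← hy] at h2
    have := (Real.sqrt_le_sqrt_iff (by positivity : (0:ℝ) ≤ 1 / s)).mp h2
    exact this
  have hqnn : 0 ≤ (y - (1 / s) • a) ⬝ᵥ (y - (1 / s) • a) := by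
    rw [← hsumsq]; positivity
  have hexp : (y - (1 / s) • a) ⬝ᵥ (y - (1 / s) • a) = y ⬝ᵥ y - 1 / s := by
    rw [sub_dotProduct, dotProduct_sub, dotProduct_sub,
      smul_dotProduct, smul_dotProduct, dotProduct_smul,
      dotProduct_smul, dotProduct_comm y a, h1, ← hs,
      smul_eq_mul, smul_eq_mul, smul_eq_mul]
    field_simp
    ring
  have hq0 : y - (1 / s) • a = 0 := by
    apply dotProduct_self_eq_zero.mp
    have : (y - (1 / s) • a) ⬝ᵥ (y - (1 / s) • a) ≤ 0 := by rw [hexp]; linarith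
    linarith
  have hyeq : y = (1 / s) • a := sub_eq_zero.mp hq0
  have hentry : (Dᵀ * C) j i = (1 / s) * ((V j) ⬝ᵥ a) := by
    have h3 : (Dᵀ * C) j i = (Dᵀ *ᵥ Cᵀ i) j := by
      simp [Matrix.mul_apply, Matrix.mulVec, dotProduct]
    rw [h3, hmv, ← hy, hyeq, happ, dotProduct_smul, smul_eq_mul]
  have hnorm2 : enorm (V i) ^ 2 = s := by
    rw [enorm, Real.sq_sqrt (by positivity), hsumsq, ← ha, ← hs]
  rw [adjacency, Matrix.of_apply, hentry, hnorm2, abs_mul, abs_of_pos (by positivity : (0:ℝ) < 1/s)]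
  ring


end Paper
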